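/- Let p be a real pyramid with p not identically zero, and set s := p(0) ≥ 1. Then there exist real numbers a_1 < a_2 < ⋯ < a_s ≤ 0 < b_s < b_{s−1} < ⋯ < b_1 such that p = Σ_{i=1}^{s} 1_{[a_i, b_i)}; in other words, p is the sum of the indicator functions of s strictly nested intervals with pairwise distinct endpoints. -/

import Mathlib

noncomputable section
open Function
open scoped Classical

/-- The `ℕ`-valued indicator function of the interval `[a, b)`. -/
def ind (a b : ℝ) : ℝ → ℕ := (Set.Ico a b).indicator fun _ => 1

/-- A real pyramid: a function `p : ℝ → ℕ` vanishing outside a bounded set, maximal at `0`,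
nondecreasing on `(-∞, 0]`, nonincreasing on `[0, ∞)`, right-continuous and piecewise
constant with finitely many discontinuities, and with jumps of size at most 1
(`p₋(x)` is the left limit of `p` at `x`). -/
def IsRealPyramid (p : ℝ → ℕ) : Prop :=
  (∃ M : ℝ, ∀ x : ℝ, M ≤ |x| → p x = 0) ∧
  (∀ x, p x ≤ p 0) ∧
  (∀ ⦃x y : ℝ⦄, x ≤ y → y ≤ 0 → p x ≤ p y) ∧
  (∀ ⦃x y : ℝ⦄, 0 ≤ x → x ≤ y → p y ≤ p x) ∧
  (∀ x, ContinuousWithinAt p (Set.Ici x) x) ∧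
  {x : ℝ | ¬ ContinuousAt p x}.Finite ∧
  (∀ x, |(p x : ℤ) - ((Function.leftLim p x : ℕ) : ℤ)| ≤ 1)

/-- The interval `[a, b)` is addable for `p` if `p + 1_{[a,b)}` is again a real pyramid. -/
def Addable (p : ℝ → ℕ) (a b : ℝ) : Prop := IsRealPyramid (fun x => p x + ind a b x)

/-- The interval `[a, b)` is removable for `p` if `p ≥ 1` on `[a, b)` and `p − 1_{[a,b)}`
is again a real pyramid. -/
def Removable (p : ℝ → ℕ) (a b : ℝ) : Prop :=
  (∀ x ∈ Set.Ico a b, 1 ≤ p x) ∧ IsRealPyramid (fun x => p x - ind a b x)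

/-- `n_J(p)`: `1` if `J = [a,b)` is addable for `p`, `−1` if removable, `0` otherwise. -/
def nJ (p : ℝ → ℕ) (a b : ℝ) : ℤ :=
  if Addable p a b then 1 else if Removable p a b then -1 else 0

open Set Filter Topology

/-- a nonzero real pyramid `p` with `s := p 0 ≥ 1` is the sum of the indicator
functions of `s` strictly nested intervals `[a_i, b_i)` with
`a_1 < ⋯ < a_s ≤ 0 < b_s < ⋯ < b_1` (pairwise distinct endpoints). -/
theorem pyramid_eq_sum_nested_intervals (p : ℝ → ℕ) (hp : IsRealPyramid p)
    (hne : p ≠ fun _ => 0) :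
    1 ≤ p 0 ∧
      ∃ a b : Fin (p 0) → ℝ, StrictMono a ∧ StrictAnti b ∧
        (∀ i, a i ≤ 0) ∧ (∀ i, 0 < b i) ∧
        ∀ x, p x = ∑ i : Fin (p 0), ind (a i) (b i) x := by
  obtain ⟨⟨M, hM⟩, hmax, hmono, hanti, hrc, hfin, hjump⟩ := hp
  have hs : 1 ≤ p 0 := by
    by_contra h
    push_neg at h
    exact hne (funext fun x => by have := hmax x; omega)
  refine ⟨hs, ?_⟩
  set s := p 0 with hs0
  -- level sets
  set S : ℕ → Set ℝ := fun k => {x | k ≤ p x} with hS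
  have h0mem : ∀ k, k ≤ s → 0 ∈ S k := fun k hk => hk
  have hbddA : ∀ k, 1 ≤ k → BddBelow (S k) := by
    intro k hk
    refine ⟨-M, fun x hx => ?_⟩
    by_contra h
    push_neg at h
    have : M ≤ |x| := le_abs.2 (Or.inr (by linarith))
    have := hM x this
    have : k ≤ p x := hx
    omega
  have hbddB : ∀ k, 1 ≤ k → BddAbove (S k) := by
    intro k hk
    refine ⟨M, fun x hx => ?_⟩
    by_contra h
    push_neg at h
    have : M ≤ |x| := le_abs.2 (Or.inl h.le)
    have := hM x this
    have : k ≤ p x := hx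
    omega
  -- right constancy
  have hrcst : ∀ x : ℝ, ∃ u, x < u ∧ ∀ y, x ≤ y → y < u → p y = p x := by
    intro x
    have h := hrc x
    have hmem : p ⁻¹' {p x} ∈ 𝓝[Set.Ici x] x :=
      h ((isOpen_discrete ({p x} : Set ℕ)).mem_nhds rfl)
    rw [mem_nhdsGE_iff_exists_Ico_subset] at hmem
    obtain ⟨u, hu, hsub⟩ := hmem
    exact ⟨u, hu, fun y h1 h2 => hsub ⟨h1, h2⟩⟩
  set A : ℕ → ℝ := fun k => sInf (S k) with hA
  set B : ℕ → ℝ := fun k => sSup (S k) with hB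
  have hAmem : ∀ k, 1 ≤ k → k ≤ s → k ≤ p (A k) := by
    intro k h1 h2
    obtain ⟨u, hu, hcst⟩ := hrcst (A k)
    obtain ⟨y, hy, hylt⟩ := (csInf_lt_iff (hbddA k h1) ⟨0, h0mem k h2⟩).1 hu
    have hyA : A k ≤ y := csInf_le (hbddA k h1) hy
    have : p y = p (A k) := hcst y hyA hylt
    have : k ≤ p y := hy
    omega
  have hBnot : ∀ k, 1 ≤ k → k ≤ s → p (B k) < k := by
    intro k h1 h2
    by_contra h
    push_neg at h
    obtain ⟨u, hu, hcst⟩ := hrcst (B k)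
    have hmem : ((B k + u) / 2) ∈ S k := by
      have : p ((B k + u)/2) = p (B k) := hcst _ (by linarith) (by linarith)
      show k ≤ _
      omega
    have := le_csSup (hbddB k h1) hmem
    linarith
  have hSeq : ∀ k, 1 ≤ k → k ≤ s → S k = Ico (A k) (B k) := by
    intro k h1 h2
    ext x
    constructor
    · intro hx
      refine ⟨csInf_le (hbddA k h1) hx, ?_⟩
      rcases lt_or_eq_of_le (le_csSup (hbddB k h1) hx) with h | h
      · exact h
      · exfalso; have := hBnot k h1 h2; rw [h] at hx; have : k ≤ p (B k) := hx; omega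
    · rintro ⟨hax, hxb⟩
      rcases le_total x 0 with hx0 | hx0
      · have := hmono hax hx0
        have := hAmem k h1 h2
        show k ≤ p x
        omega
      · obtain ⟨z, hz, hxz⟩ := exists_lt_of_lt_csSup ⟨0, h0mem k h2⟩ hxb
        have := hanti hx0 hxz.le
        have : k ≤ p z := hz
        show k ≤ p x
        omega
  have hA0 : ∀ k, 1 ≤ k → k ≤ s → A k ≤ 0 := fun k h1 h2 => csInf_le (hbddA k h1) (h0mem k h2)
  have hB0 : ∀ k, 1 ≤ k → k ≤ s → 0 < B k := by
    intro k h1 h2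
    have h0B : 0 ≤ B k := le_csSup (hbddB k h1) (h0mem k h2)
    rcases lt_or_eq_of_le h0B with h | h
    · exact h
    · exfalso
      have := hBnot k h1 h2
      have : k ≤ p (B k) := by rw [← h]; exact h0mem k h2
      omega
  have hSsub : ∀ k l, k ≤ l → S l ⊆ S k := by
    intro k l hkl x hx
    exact le_trans hkl hx
  have hAmono : ∀ k l, 1 ≤ k → k ≤ l → l ≤ s → A k ≤ A l :=
    fun k l h1 h2 h3 => csInf_le_csInf (hbddA k h1) ⟨0, h0mem l h3⟩ (hSsub k l h2)
  have hBmono : ∀ k l, 1 ≤ k → k ≤ l → l ≤ s → B l ≤ B k :=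
    fun k l h1 h2 h3 => csSup_le_csSup (hbddB k h1) ⟨0, h0mem l h3⟩ (hSsub k l h2)
  -- strictness on the left
  have hAstrict : ∀ k, 1 ≤ k → k + 1 ≤ s → A k < A (k + 1) := by
    intro k h1 h2
    rcases lt_or_eq_of_le (hAmono k (k+1) h1 (by omega) h2) with h | h
    · exact h
    · exfalso
      set c := A (k+1) with hc
      have hpc : k + 1 ≤ p c := hAmem (k+1) (by omega) h2
      have hc0 : c ≤ 0 := hA0 (k+1) (by omega) h2
      have hleft : ∀ x, x < c → p x < k := by
        intro x hx
        have : x ∉ S k := by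
          rw [hSeq k h1 (by omega)]
          rintro ⟨h3, -⟩
          rw [← h] at hx
          linarith
        simpa [hS, not_le] using this
      set q : ℝ → ℕ := fun x => p (min x 0) with hq
      have hqmono : Monotone q := fun x y hxy =>
        hmono (min_le_min hxy le_rfl) (min_le_right y 0)
      have ht : Tendsto q (𝓝[<] c) (𝓝 (sSup (q '' Iio c))) :=
        hqmono.tendsto_nhdsLT c
      have hv : sSup (q '' Iio c) ≤ k - 1 := by
        apply csSup_le (Set.nonempty_Iio.image q)
        rintro v ⟨x, hx, rfl⟩
        have hx0 : min x 0 = x := min_eq_left (by simp at hx; linarith)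
        have := hleft x hx
        simp only [hq, hx0]
        omega
      have hcongr : p =ᶠ[𝓝[<] c] q := by
        filter_upwards [eventually_mem_nhdsWithin] with x hx
        have hx' : x < c := hx
        simp [hq, min_eq_left (show x ≤ 0 by linarith)]
      have ht' : Tendsto p (𝓝[<] c) (𝓝 (sSup (q '' Iio c))) := ht.congr' hcongr.symm
      have hll : leftLim p c = sSup (q '' Iio c) :=
        leftLim_eq_of_tendsto ht'
      have hj := hjump c
      rw [hll, abs_le] at hj
      omega
  -- strictness on the right
  have hBstrict : ∀ k, 1 ≤ k → k + 1 ≤ s → B (k + 1) < B k := by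
    intro k h1 h2
    rcases lt_or_eq_of_le (hBmono k (k+1) h1 (by omega) h2) with h | h
    · exact h
    · exfalso
      set d := B k with hd
      have hd0 : 0 < d := hB0 k h1 (by omega)
      have hpd : p d < k := hBnot k h1 (by omega)
      have hleft : ∀ x, 0 ≤ x → x < d → k + 1 ≤ p x := by
        intro x hx0 hxd
        have : x ∈ S (k+1) := by
          rw [hSeq (k+1) (by omega) h2]
          refine ⟨le_trans (hA0 (k+1) (by omega) h2) hx0, ?_⟩
          rw [h]; exact hxd
        exact this
      set q : ℝ → ℕ := fun x => p (max x 0) with hq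
      have hqanti : Antitone q := fun x y hxy =>
        hanti (le_max_right x 0) (max_le_max hxy le_rfl)
      have ht : Tendsto q (𝓝[<] d) (𝓝 (sInf (q '' Iio d))) :=
        hqanti.tendsto_nhdsLT d
      have hv : k + 1 ≤ sInf (q '' Iio d) := by
        apply le_csInf (Set.nonempty_Iio.image q)
        rintro v ⟨x, hx, rfl⟩
        have hx' : x < d := hx
        exact hleft (max x 0) (le_max_right x 0) (max_lt hx' hd0)
      have hcongr : p =ᶠ[𝓝[<] d] q := by
        filter_upwards [Ioo_mem_nhdsLT_of_mem (show d ∈ Ioc 0 d from ⟨hd0, le_rfl⟩)] with x hx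
        simp [hq, max_eq_left hx.1.le]
      have ht' : Tendsto p (𝓝[<] d) (𝓝 (sInf (q '' Iio d))) := ht.congr' hcongr.symm
      have hll : leftLim p d = sInf (q '' Iio d) :=
        leftLim_eq_of_tendsto ht'
      have hj := hjump d
      rw [hll, abs_le] at hj
      omega
  -- assemble
  refine ⟨fun i => A (i.val + 1), fun i => B (i.val + 1), ?_, ?_, ?_, ?_, ?_⟩
  · intro i j hij
    calc A (i.val + 1) < A (i.val + 2) := hAstrict (i.val + 1) (by omega) (by have := j.isLt; omega)
      _ ≤ A (j.val + 1) := hAmono _ _ (by omega) (by have : i.val < j.val := hij; omega)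
          (by have := j.isLt; omega)
  · intro i j hij
    calc B (j.val + 1) ≤ B (i.val + 2) := hBmono _ _ (by omega)
          (by have : i.val < j.val := hij; omega) (by have := j.isLt; omega)
      _ < B (i.val + 1) := hBstrict (i.val + 1) (by omega) (by have := j.isLt; omega)
  · exact fun i => hA0 _ (by omega) (by have := i.isLt; omega)
  · exact fun i => hB0 _ (by omega) (by have := i.isLt; omega)
  · intro x
    have hix : ∀ i : Fin s, ind (A (i.val+1)) (B (i.val+1)) x
        = if i.val + 1 ≤ p x then 1 else 0 := by
      intro i
      have hmemiff : x ∈ Ico (A (i.val+1)) (B (i.val+1)) ↔ i.val + 1 ≤ p x := by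
        rw [← hSeq (i.val+1) (by omega) (by have := i.isLt; omega)]
        rfl
      simp only [ind, Set.indicator_apply]
      by_cases hc : i.val + 1 ≤ p x
      · rw [if_pos (hmemiff.2 hc), if_pos hc]
      · rw [if_neg (fun hh => hc (hmemiff.1 hh)), if_neg hc]
    rw [Finset.sum_congr rfl (fun i _ => hix i)]
    have hpx : p x ≤ s := hmax x
    rw [Fin.sum_univ_eq_sum_range (fun i => if i + 1 ≤ p x then 1 else 0) s]
    rw [← Finset.sum_filter]
    have : Finset.filter (fun i => i + 1 ≤ p x) (Finset.range s) = Finset.range (p x) := by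
      ext i
      simp only [Finset.mem_filter, Finset.mem_range]
      omega
    rw [this]
    simp
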